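/- arXiv:2509.08246 — 8 statements merged into one kernel-verified Lean document; each statement's English description precedes it below -/
import Mathlib

section
/- Let T be a triangulated category, M a rigid object (Hom(M, ΣM) = 0), and suppose X and Y admit triangles M⁻¹ →a M⁰ →b X →c ΣM⁻¹ and M'⁻¹ →a' M'⁰ →b' Y →c' ΣM'⁻¹ with all M-terms in add(M). Then the map sending a morphism f : M⁻¹ → M'⁰ to Σb' ∘ Σf ∘ c induces a bijection from the set of homotopy classes of such f (i.e. Hom in the homotopy category between the 2-term complexes (M⁻¹→M⁰) and the shift of (M'⁻¹→M'⁰)) to the set [ΣM](X, ΣY) of morphisms X → ΣY that factor through an object of add(ΣM). -/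
open CategoryTheory CategoryTheory.Limits CategoryTheory.Pretriangulated

universe v u

variable {C : Type u} [Category.{v} C] [Preadditive C] [HasZeroObject C]
  [HasShift C ℤ] [∀ n : ℤ, (shiftFunctor C n).Additive] [Pretriangulated C]
  [HasFiniteBiproducts C]

/-- `X` belongs to `add M`: it is a direct summand of a finite direct sum of copies of `M`. -/
def InAdd (M X : C) : Prop :=
  ∃ (n : ℕ) (i : X ⟶ ⨁ (fun _ : Fin n => M)) (p : (⨁ (fun _ : Fin n => M)) ⟶ X),
    i ≫ p = 𝟙 X

/-- A morphism `w : X ⟶ ΣY` factors through an object of `add (ΣM)`. -/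
def FactorsThroughAddShift (M : C) {X Y : C} (w : X ⟶ Y⟦(1 : ℤ)⟧) : Prop :=
  ∃ (Z : C), InAdd M Z ∧ ∃ (f : X ⟶ Z⟦(1 : ℤ)⟧) (g : Z⟦(1 : ℤ)⟧ ⟶ Y⟦(1 : ℤ)⟧),
    w = f ≫ g

omit [HasZeroObject C] [Pretriangulated C] in
lemma vanish {M Z1 Z2 : C}
    (hrigid : ∀ f : M ⟶ M⟦(1 : ℤ)⟧, f = 0)
    (hZ1 : InAdd M Z1) (hZ2 : InAdd M Z2) (φ : Z1 ⟶ Z2⟦(1 : ℤ)⟧) : φ = 0 := by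
  obtain ⟨n, i1, p1, hip1⟩ := hZ1
  obtain ⟨m, i2, p2, hip2⟩ := hZ2
  have key : ∀ ψ : M ⟶ Z2⟦(1 : ℤ)⟧, ψ = 0 := by
    intro ψ
    have h2 : ψ ≫ i2⟦(1 : ℤ)⟧' = 0 := by
      let e := (shiftFunctor C (1 : ℤ)).mapBiproduct (fun _ : Fin m => M)
      have h3 : (ψ ≫ i2⟦(1 : ℤ)⟧') ≫ e.hom = 0 := by
        apply biproduct.hom_ext
        intro j
        have : e.hom ≫ biproduct.π _ j =
            (biproduct.π (fun _ : Fin m => M) j)⟦(1 : ℤ)⟧' := by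
          simp [e, Functor.mapBiproduct_hom]
          erw [biproduct.lift_π]
          simp
        rw [Category.assoc, this, Category.assoc, ← Functor.map_comp,
          hrigid (ψ ≫ (i2 ≫ biproduct.π (fun _ : Fin m => M) j)⟦(1 : ℤ)⟧'),
          zero_comp]
      simpa using h3 =≫ e.inv
    calc ψ = ψ ≫ (i2 ≫ p2)⟦(1 : ℤ)⟧' := by rw [hip2]; simp
    _ = (ψ ≫ i2⟦(1 : ℤ)⟧') ≫ p2⟦(1 : ℤ)⟧' := by rw [Functor.map_comp]; simp
    _ = 0 := by rw [h2, zero_comp]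
  calc φ = i1 ≫ (p1 ≫ φ) := by rw [← Category.assoc, hip1, Category.id_comp]
  _ = 0 := by
      have : p1 ≫ φ = 0 := by
        apply biproduct.hom_ext'
        intro j
        simp only [comp_zero]
        exact key _
      rw [this, comp_zero]

/-- For a rigid object `M` and presentation triangles of `X` and `Y`,
the assignment `f ↦ Σb' ∘ Σf ∘ c` induces a bijection from homotopy classes of
morphisms `M⁻¹ ⟶ M'⁰` (between the two-term complexes `(M⁻¹ → M⁰)` and the shift of
`(M'⁻¹ → M'⁰)`) onto the set `[ΣM](X, ΣY)` of morphisms factoring through `add (ΣM)`. -/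
theorem stmt0 (M X Y Mm1 M0 Mm1' M0' : C)
    (hrigid : ∀ f : M ⟶ M⟦(1 : ℤ)⟧, f = 0)
    (h1 : InAdd M Mm1) (h0 : InAdd M M0) (h1' : InAdd M Mm1') (h0' : InAdd M M0')
    (a : Mm1 ⟶ M0) (b : M0 ⟶ X) (c : X ⟶ Mm1⟦(1 : ℤ)⟧)
    (a' : Mm1' ⟶ M0') (b' : M0' ⟶ Y) (c' : Y ⟶ Mm1'⟦(1 : ℤ)⟧)
    (hT : Triangle.mk a b c ∈ distTriang C)
    (hT' : Triangle.mk a' b' c' ∈ distTriang C) :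
    (∀ f : Mm1 ⟶ M0',
        FactorsThroughAddShift M (c ≫ f⟦(1 : ℤ)⟧' ≫ b'⟦(1 : ℤ)⟧')) ∧
    (∀ w : X ⟶ Y⟦(1 : ℤ)⟧, FactorsThroughAddShift M w →
        ∃ f : Mm1 ⟶ M0', w = c ≫ f⟦(1 : ℤ)⟧' ≫ b'⟦(1 : ℤ)⟧') ∧
    (∀ f f' : Mm1 ⟶ M0',
        (c ≫ f⟦(1 : ℤ)⟧' ≫ b'⟦(1 : ℤ)⟧' = c ≫ f'⟦(1 : ℤ)⟧' ≫ b'⟦(1 : ℤ)⟧') ↔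
          ∃ (h0 : M0 ⟶ M0') (hm1 : Mm1 ⟶ Mm1'), f - f' = a ≫ h0 - hm1 ≫ a') := by
  refine ⟨?_, ?_, ?_⟩
  · intro f
    exact ⟨Mm1, h1, c, f⟦(1 : ℤ)⟧' ≫ b'⟦(1 : ℤ)⟧', rfl⟩
  · rintro w ⟨Z, hZ, f, g, rfl⟩
    obtain ⟨g0, hg0⟩ : ∃ g0 : Z ⟶ Y, g0⟦(1 : ℤ)⟧' = g :=
      ⟨(shiftFunctor C (1 : ℤ)).preimage g, (shiftFunctor C (1 : ℤ)).map_preimage g⟩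
    have hg0c : g0 ≫ c' = 0 := vanish hrigid hZ h1' _
    obtain ⟨u, hu⟩ : ∃ u : Z ⟶ M0', g0 = u ≫ b' := Triangle.coyoneda_exact₃ _ hT' g0 hg0c
    have hbf : b ≫ f = 0 := vanish hrigid h0 hZ _
    obtain ⟨v, hv⟩ : ∃ v : Mm1⟦(1 : ℤ)⟧ ⟶ Z⟦(1 : ℤ)⟧, f = c ≫ v :=
      Triangle.yoneda_exact₃ _ hT f hbf
    obtain ⟨v0, hv0⟩ : ∃ v0 : Mm1 ⟶ Z, v0⟦(1 : ℤ)⟧' = v :=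
      ⟨(shiftFunctor C (1 : ℤ)).preimage v, (shiftFunctor C (1 : ℤ)).map_preimage v⟩
    refine ⟨v0 ≫ u, ?_⟩
    rw [hv, ← hg0, ← hv0, hu, Functor.map_comp, Functor.map_comp]
    simp
  · intro f f'
    constructor
    · intro hff
      have hc : c ≫ ((f - f') ≫ b')⟦(1 : ℤ)⟧' = 0 := by
        rw [Preadditive.sub_comp, Functor.map_sub, Preadditive.comp_sub,
          sub_eq_zero, Functor.map_comp, Functor.map_comp]
        exact hff
      obtain ⟨k, hk⟩ : ∃ k : M0⟦(1 : ℤ)⟧ ⟶ Y⟦(1 : ℤ)⟧,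
          ((f - f') ≫ b')⟦(1 : ℤ)⟧' = (-(a⟦(1 : ℤ)⟧')) ≫ k :=
        Triangle.yoneda_exact₃ _ (rot_of_distTriang _ hT)
        (((f - f') ≫ b')⟦(1 : ℤ)⟧') hc
      obtain ⟨k0, hk0⟩ : ∃ k0 : M0 ⟶ Y, k0⟦(1 : ℤ)⟧' = k :=
        ⟨(shiftFunctor C (1 : ℤ)).preimage k, (shiftFunctor C (1 : ℤ)).map_preimage k⟩
      rw [← hk0, Preadditive.neg_comp, ← Functor.map_comp, ← Functor.map_neg] at hk
      have hgb : (f - f') ≫ b' = a ≫ (-k0) := by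
        have := (shiftFunctor C (1 : ℤ)).map_injective hk
        rw [this]; simp
      have hcc : (-k0) ≫ c' = 0 := vanish hrigid h0 h1' _
      obtain ⟨h00, hh0⟩ : ∃ h00 : M0 ⟶ M0', -k0 = h00 ≫ b' :=
        Triangle.coyoneda_exact₃ _ hT' (-k0) hcc
      have hz : ((f - f') - (a ≫ h00 : Mm1 ⟶ M0')) ≫ b' = 0 := by
        rw [Preadditive.sub_comp, hgb, hh0, Category.assoc, sub_self]
      obtain ⟨hm1', hhm⟩ : ∃ hm1' : Mm1 ⟶ Mm1', (f - f') - a ≫ h00 = hm1' ≫ a' :=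
        Triangle.coyoneda_exact₂ _ hT' _ hz
      refine ⟨h00, -hm1', ?_⟩
      rw [Preadditive.neg_comp, sub_neg_eq_add, ← hhm]
      abel
    · rintro ⟨h00, hm1, hff⟩
      have : c ≫ (f - f')⟦(1 : ℤ)⟧' ≫ b'⟦(1 : ℤ)⟧' = 0 := by
        rw [hff, Functor.map_sub, Functor.map_comp, Functor.map_comp,
          Preadditive.sub_comp, Preadditive.comp_sub]
        have h31 : c ≫ a⟦(1 : ℤ)⟧' = 0 := comp_distTriang_mor_zero₃₁ _ hT
        have h12 : a' ≫ b' = 0 := comp_distTriang_mor_zero₁₂ _ hT'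
        rw [Category.assoc, ← Category.assoc c, h31, zero_comp,
          Category.assoc, ← Functor.map_comp, h12]
        simp
      rw [Functor.map_sub, Preadditive.sub_comp, Preadditive.comp_sub,
        sub_eq_zero] at this
      exact this
end

section
/- Let T be a triangulated category and M a rigid object. If Y → Z → X →w ΣY is a triangle in T with X, Y ∈ pr(M) and w factoring through an object of add(ΣM), then Z ∈ pr(M), where pr(M) is the full subcategory of objects admitting a triangle M⁻¹ → M⁰ → X → ΣM⁻¹ with M⁻¹, M⁰ ∈ add(M). In other words, pr(M) is closed under [ΣM]-extensions. -/
open CategoryTheory CategoryTheory.Limits CategoryTheory.Pretriangulated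

universe v u

variable {C : Type u} [Category.{v} C] [Preadditive C] [HasZeroObject C]
  [HasShift C ℤ] [∀ n : ℤ, (shiftFunctor C n).Additive] [Pretriangulated C]
  [HasFiniteBiproducts C]

/-- `X` is finitely presented by `M`: there is a triangle `M⁻¹ → M⁰ → X → ΣM⁻¹`
with `M⁻¹, M⁰ ∈ add M`. -/
def Pr (M X : C) : Prop :=
  ∃ (Mm1 M0 : C), InAdd M Mm1 ∧ InAdd M M0 ∧
    ∃ (a : Mm1 ⟶ M0) (b : M0 ⟶ X) (c : X ⟶ Mm1⟦(1 : ℤ)⟧),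
      Triangle.mk a b c ∈ distTriang C

/-- If `P` is a retract of `Q` and `Q ∈ add M`, then `P ∈ add M`. -/
lemma inAdd_of_retract {M P Q : C} (s : P ⟶ Q) (r : Q ⟶ P) (hsr : s ≫ r = 𝟙 P)
    (hQ : InAdd M Q) : InAdd M P := by
  obtain ⟨n, i, p, hip⟩ := hQ
  refine ⟨n, s ≫ i, p ≫ r, ?_⟩
  calc (s ≫ i) ≫ p ≫ r = s ≫ (i ≫ p) ≫ r := by simp only [Category.assoc]
  _ = s ≫ r := by rw [hip, Category.id_comp]
  _ = 𝟙 P := hsr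

/-- `add M` is closed under binary biproducts. -/
lemma inAdd_biprod {M P Q : C} (hP : InAdd M P) (hQ : InAdd M Q) : InAdd M (P ⊞ Q) := by
  obtain ⟨n, iP, pP, hiP⟩ := hP
  obtain ⟨m, iQ, pQ, hiQ⟩ := hQ
  let A₁ : (⨁ fun _ : Fin n => M) ⟶ (⨁ fun _ : Fin (n + m) => M) :=
    biproduct.lift (fun k => if h : (k : ℕ) < n then
      biproduct.π (fun _ : Fin n => M) ⟨(k : ℕ), h⟩ else 0)
  let A₂ : (⨁ fun _ : Fin m => M) ⟶ (⨁ fun _ : Fin (n + m) => M) :=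
    biproduct.lift (fun k => if h : (k : ℕ) < n then 0 else
      biproduct.π (fun _ : Fin m => M) ⟨(k : ℕ) - n, by omega⟩)
  let B₁ : (⨁ fun _ : Fin (n + m) => M) ⟶ (⨁ fun _ : Fin n => M) :=
    biproduct.lift (fun j => biproduct.π (fun _ : Fin (n + m) => M) (Fin.castAdd m j))
  let B₂ : (⨁ fun _ : Fin (n + m) => M) ⟶ (⨁ fun _ : Fin m => M) :=
    biproduct.lift (fun j => biproduct.π (fun _ : Fin (n + m) => M) (Fin.natAdd n j))
  have h11 : A₁ ≫ B₁ = 𝟙 _ := by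
    apply biproduct.hom_ext
    intro j
    simp only [A₁, B₁, Category.assoc, biproduct.lift_π, Category.id_comp]
    rw [dif_pos (show ((Fin.castAdd m j : Fin (n + m)) : ℕ) < n by
      simpa using j.isLt)]
    congr 1 <;> exact Fin.ext (by simp)
  have h12 : A₁ ≫ B₂ = 0 := by
    apply biproduct.hom_ext
    intro j
    simp only [A₁, B₂, Category.assoc, biproduct.lift_π, zero_comp]
    rw [dif_neg (show ¬ ((Fin.natAdd n j : Fin (n + m)) : ℕ) < n by simp)]
  have h21 : A₂ ≫ B₁ = 0 := by
    apply biproduct.hom_ext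
    intro j
    simp only [A₂, B₁, Category.assoc, biproduct.lift_π, zero_comp]
    rw [dif_pos (show ((Fin.castAdd m j : Fin (n + m)) : ℕ) < n by simpa using j.isLt)]
  have h22 : A₂ ≫ B₂ = 𝟙 _ := by
    apply biproduct.hom_ext
    intro j
    simp only [A₂, B₂, Category.assoc, biproduct.lift_π, Category.id_comp]
    rw [dif_neg (show ¬ ((Fin.natAdd n j : Fin (n + m)) : ℕ) < n by simp)]
    congr 1 <;> exact Fin.ext (by simp)
  refine ⟨n + m, biprod.desc (iP ≫ A₁) (iQ ≫ A₂), biprod.lift (B₁ ≫ pP) (B₂ ≫ pQ), ?_⟩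
  apply biprod.hom_ext'
  · apply biprod.hom_ext
    · simp only [biprod.inl_desc_assoc, Category.assoc, biprod.lift_fst, biprod.inl_fst,
        Category.comp_id]
      calc iP ≫ A₁ ≫ B₁ ≫ pP = iP ≫ (A₁ ≫ B₁) ≫ pP := by simp only [Category.assoc]
      _ = 𝟙 P := by rw [h11, Category.id_comp, hiP]
    · simp only [biprod.inl_desc_assoc, Category.assoc, biprod.lift_snd, biprod.inl_snd,
        Category.comp_id]
      calc iP ≫ A₁ ≫ B₂ ≫ pQ = iP ≫ (A₁ ≫ B₂) ≫ pQ := by simp only [Category.assoc]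
      _ = 0 := by rw [h12, zero_comp, comp_zero]
  · apply biprod.hom_ext
    · simp only [biprod.inr_desc_assoc, Category.assoc, biprod.lift_fst, biprod.inr_fst,
        Category.comp_id]
      calc iQ ≫ A₂ ≫ B₁ ≫ pP = iQ ≫ (A₂ ≫ B₁) ≫ pP := by simp only [Category.assoc]
      _ = 0 := by rw [h21, zero_comp, comp_zero]
    · simp only [biprod.inr_desc_assoc, Category.assoc, biprod.lift_snd, biprod.inr_snd,
        Category.comp_id]
      calc iQ ≫ A₂ ≫ B₂ ≫ pQ = iQ ≫ (A₂ ≫ B₂) ≫ pQ := by simp only [Category.assoc]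
      _ = 𝟙 Q := by rw [h22, Category.id_comp, hiQ]

/-- Rigidity propagates to `add M`: any morphism `P ⟶ Q⟦1⟧` with `P, Q ∈ add M` vanishes. -/
lemma rigid_hom {M : C} (hrigid : ∀ f : M ⟶ M⟦(1 : ℤ)⟧, f = 0) {P Q : C}
    (hP : InAdd M P) (hQ : InAdd M Q) (f : P ⟶ Q⟦(1 : ℤ)⟧) : f = 0 := by
  obtain ⟨n, iP, pP, hiP⟩ := hP
  obtain ⟨m, iQ, pQ, hiQ⟩ := hQ
  have hg : ∀ (g : (⨁ fun _ : Fin n => M) ⟶ (⨁ fun _ : Fin m => M)⟦(1 : ℤ)⟧), g = 0 := by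
    intro g
    calc g = g ≫ 𝟙 _ := (Category.comp_id g).symm
    _ = g ≫ (𝟙 (⨁ fun _ : Fin m => M))⟦(1 : ℤ)⟧' := by rw [CategoryTheory.Functor.map_id]
    _ = g ≫ (∑ j : Fin m, biproduct.π (fun _ : Fin m => M) j ≫
          biproduct.ι (fun _ : Fin m => M) j)⟦(1 : ℤ)⟧' := by rw [biproduct.total]
    _ = ∑ j : Fin m, g ≫ ((biproduct.π (fun _ : Fin m => M) j)⟦(1 : ℤ)⟧' ≫
          (biproduct.ι (fun _ : Fin m => M) j)⟦(1 : ℤ)⟧') := by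
        rw [CategoryTheory.Functor.map_sum, Preadditive.comp_sum]
        exact Finset.sum_congr rfl (fun j _ => by rw [CategoryTheory.Functor.map_comp])
    _ = 0 := by
        apply Finset.sum_eq_zero
        intro j _
        have hzero : g ≫ (biproduct.π (fun _ : Fin m => M) j)⟦(1 : ℤ)⟧' = 0 := by
          apply biproduct.hom_ext'
          intro j'
          rw [comp_zero]
          exact hrigid (biproduct.ι (fun _ : Fin n => M) j' ≫ g ≫
            (biproduct.π (fun _ : Fin m => M) j)⟦(1 : ℤ)⟧')
        rw [← Category.assoc, hzero, zero_comp]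
  have hmid : pP ≫ f ≫ (iQ)⟦(1 : ℤ)⟧' = 0 := hg _
  calc f = (iP ≫ pP) ≫ f ≫ ((iQ ≫ pQ)⟦(1 : ℤ)⟧') := by
        rw [hiP, hiQ, CategoryTheory.Functor.map_id, Category.id_comp, Category.comp_id]
    _ = iP ≫ (pP ≫ f ≫ (iQ)⟦(1 : ℤ)⟧') ≫ (pQ)⟦(1 : ℤ)⟧' := by
        rw [CategoryTheory.Functor.map_comp]; simp only [Category.assoc]
    _ = 0 := by rw [hmid, zero_comp, comp_zero]

/-- `pr(M)` is closed under `[ΣM]`-extensions: if `Y → Z → X →w ΣY`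
is a triangle with `X, Y ∈ pr(M)` and `w` factoring through `add (ΣM)`, then `Z ∈ pr(M)`. -/
theorem stmt1 (M X Y Z : C)
    (hrigid : ∀ f : M ⟶ M⟦(1 : ℤ)⟧, f = 0)
    (hX : Pr M X) (hY : Pr M Y)
    (u : Y ⟶ Z) (v : Z ⟶ X) (w : X ⟶ Y⟦(1 : ℤ)⟧)
    (hT : Triangle.mk u v w ∈ distTriang C)
    (hw : FactorsThroughAddShift M w) :
    Pr M Z := by
  obtain ⟨M₁, M₀, hM₁, hM₀, a, b, c, hT1⟩ := hX
  obtain ⟨N₁, N₀, hN₁, hN₀, a', b', c', hT2⟩ := hY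
  obtain ⟨R, hR, f, g, hwfg⟩ := hw
  obtain ⟨g', rfl⟩ := (shiftFunctor C (1 : ℤ)).map_surjective g
  -- Step 0: `w` factors as `e ≫ b'⟦1⟧`.
  have hg'c' : g' ≫ c' = 0 := rigid_hom hrigid hR hN₁ _
  have hhE : ∃ h1 : R ⟶ N₀, g' = h1 ≫ b' := Triangle.coyoneda_exact₃ _ hT2 g' hg'c'
  obtain ⟨h1, hh⟩ := hhE
  set e : X ⟶ N₀⟦(1 : ℤ)⟧ := f ≫ h1⟦(1 : ℤ)⟧' with he
  have hw2 : w = e ≫ b'⟦(1 : ℤ)⟧' := by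
    rw [hwfg, hh, CategoryTheory.Functor.map_comp]
    simp only [he, Category.assoc]
  -- `b ≫ w = 0`, giving a lift `bt : M₀ ⟶ Z` of `b`.
  have hbe : b ≫ e = 0 := rigid_hom hrigid hM₀ hN₀ _
  have hbw : b ≫ w = 0 := by rw [hw2, ← Category.assoc, hbe, zero_comp]
  have hbtE : ∃ bt : M₀ ⟶ Z, b = bt ≫ v := Triangle.coyoneda_exact₃ _ hT b hbw
  obtain ⟨bt, hbt⟩ := hbtE
  -- `c'` extends along `u` to `ζ : Z ⟶ N₁⟦1⟧`.
  have hb'c' : b' ≫ c' = 0 := comp_distTriang_mor_zero₂₃ _ hT2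
  have hwc' : w ≫ c'⟦(1 : ℤ)⟧' = 0 := by
    rw [hw2, Category.assoc, ← CategoryTheory.Functor.map_comp, hb'c',
      CategoryTheory.Functor.map_zero, comp_zero]
  have hσ : (Triangle.mk u v w).invRotate.mor₁ ≫ c' = 0 := by
    have hnat := (shiftFunctorCompIsoId C (1 : ℤ) (-1 : ℤ) (by omega)).hom.naturality c'
    dsimp at hnat
    change (-(w⟦(-1 : ℤ)⟧') ≫ (shiftFunctorCompIsoId C (1 : ℤ) (-1 : ℤ) (by omega)).hom.app Y) ≫ c' = 0
    rw [Preadditive.neg_comp, neg_eq_zero, Category.assoc, ← hnat,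
      ← CategoryTheory.Functor.map_comp_assoc, hwc', CategoryTheory.Functor.map_zero, zero_comp]
  have hζE : ∃ ζ : Z ⟶ N₁⟦(1 : ℤ)⟧, c' = u ≫ ζ :=
    Triangle.yoneda_exact₂ _ (inv_rot_of_distTriang _ hT) c' hσ
  obtain ⟨ζ, hζ⟩ := hζE
  have hbtζ : bt ≫ ζ = 0 := rigid_hom hrigid hM₀ hN₁ _
  -- The connecting morphism `ρ : Z ⟶ (M₁ ⊞ N₁)⟦1⟧`.
  let dinv : M₁⟦(1 : ℤ)⟧ ⊞ N₁⟦(1 : ℤ)⟧ ⟶ (M₁ ⊞ N₁)⟦(1 : ℤ)⟧ :=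
    biprod.desc ((biprod.inl : M₁ ⟶ M₁ ⊞ N₁)⟦(1 : ℤ)⟧')
      ((biprod.inr : N₁ ⟶ M₁ ⊞ N₁)⟦(1 : ℤ)⟧')
  let dhom : (M₁ ⊞ N₁)⟦(1 : ℤ)⟧ ⟶ M₁⟦(1 : ℤ)⟧ ⊞ N₁⟦(1 : ℤ)⟧ :=
    biprod.lift ((biprod.fst : M₁ ⊞ N₁ ⟶ M₁)⟦(1 : ℤ)⟧')
      ((biprod.snd : M₁ ⊞ N₁ ⟶ N₁)⟦(1 : ℤ)⟧')
  have hdd : dinv ≫ dhom = 𝟙 _ := by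
    apply biprod.hom_ext'
    · apply biprod.hom_ext <;>
        simp [dinv, dhom, ← CategoryTheory.Functor.map_comp]
    · apply biprod.hom_ext <;>
        simp [dinv, dhom, ← CategoryTheory.Functor.map_comp]
  let ρ : Z ⟶ (M₁ ⊞ N₁)⟦(1 : ℤ)⟧ := biprod.lift (v ≫ c) ζ ≫ dinv
  obtain ⟨P, q, p, hT'⟩ := distinguished_cocone_triangle₂ ρ
  -- component vanishing from `p ≫ ρ = 0`
  have hpρ : p ≫ ρ = 0 := comp_distTriang_mor_zero₂₃ _ hT'
  have hpl : p ≫ biprod.lift (v ≫ c) ζ = 0 := by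
    have h0 : (p ≫ (biprod.lift (v ≫ c) ζ ≫ dinv)) ≫ dhom = 0 := by
      rw [show p ≫ (biprod.lift (v ≫ c) ζ ≫ dinv) = p ≫ ρ from rfl, hpρ, zero_comp]
    simp only [Category.assoc] at h0
    rw [hdd, Category.comp_id] at h0
    exact h0
  have hpvc : p ≫ v ≫ c = 0 := by
    have h2 := congrArg (fun t => t ≫ (biprod.fst : M₁⟦(1 : ℤ)⟧ ⊞ N₁⟦(1 : ℤ)⟧ ⟶ _)) hpl
    simpa using h2
  have hpζ : p ≫ ζ = 0 := by
    have h2 := congrArg (fun t => t ≫ (biprod.snd : M₁⟦(1 : ℤ)⟧ ⊞ N₁⟦(1 : ℤ)⟧ ⟶ _)) hpl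
    simpa using h2
  -- lift `p ≫ v` through `b`
  have hj₁E : ∃ j₁ : P ⟶ M₀, p ≫ v = j₁ ≫ b := Triangle.coyoneda_exact₃ _ hT1 (p ≫ v)
    (by show (p ≫ v) ≫ c = 0; rw [Category.assoc]; exact hpvc)
  obtain ⟨j₁, hj₁⟩ := hj₁E
  -- lift `p - j₁ ≫ bt` through `u`
  have hyE : ∃ y : P ⟶ Y, p - j₁ ≫ bt = y ≫ u := Triangle.coyoneda_exact₂ _ hT (p - j₁ ≫ bt)
    (by show (p - j₁ ≫ bt) ≫ v = 0
        rw [Preadditive.sub_comp, Category.assoc, ← hbt, ← hj₁, sub_self])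
  obtain ⟨y, hy⟩ := hyE
  -- lift `y` through `b'`
  have hyc' : y ≫ c' = 0 := by
    rw [hζ, ← Category.assoc, ← hy, Preadditive.sub_comp, hpζ, Category.assoc, hbtζ,
      comp_zero, sub_zero]
  have hj₂E : ∃ j₂ : P ⟶ N₀, y = j₂ ≫ b' := Triangle.coyoneda_exact₃ _ hT2 y hyc'
  obtain ⟨j₂, hj₂⟩ := hj₂E
  -- the comparison morphism `φ`
  let φ : M₀ ⊞ N₀ ⟶ Z := biprod.desc bt (b' ≫ u)
  have hbc : b ≫ c = 0 := comp_distTriang_mor_zero₂₃ _ hT1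
  have huv : u ≫ v = 0 := comp_distTriang_mor_zero₁₂ _ hT
  have c1 : bt ≫ biprod.lift (v ≫ c) ζ = 0 := by
    apply biprod.hom_ext
    · rw [Category.assoc, biprod.lift_fst, zero_comp, ← Category.assoc, ← hbt, hbc]
    · rw [Category.assoc, biprod.lift_snd, zero_comp, hbtζ]
  have c2 : (b' ≫ u) ≫ biprod.lift (v ≫ c) ζ = 0 := by
    apply biprod.hom_ext
    · rw [Category.assoc, biprod.lift_fst, zero_comp, Category.assoc, ← Category.assoc u v,
        huv, zero_comp, comp_zero]
    · rw [Category.assoc, biprod.lift_snd, zero_comp, Category.assoc, ← hζ, hb'c']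
  have hφρ : φ ≫ ρ = 0 := by
    have hl : φ ≫ biprod.lift (v ≫ c) ζ = 0 := by
      apply biprod.hom_ext'
      · rw [← Category.assoc, biprod.inl_desc, c1, comp_zero]
      · rw [← Category.assoc, biprod.inr_desc, c2, comp_zero]
    rw [show φ ≫ ρ = (φ ≫ biprod.lift (v ≫ c) ζ) ≫ dinv from by
      simp only [ρ, Category.assoc], hl, zero_comp]
  have hπE : ∃ π' : M₀ ⊞ N₀ ⟶ P, φ = π' ≫ p := Triangle.coyoneda_exact₃ _ hT' φ hφρ
  obtain ⟨π', hπ'⟩ := hπE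
  -- the retraction
  have key : (biprod.lift j₁ j₂ ≫ π') ≫ p = p := by
    rw [Category.assoc, ← hπ']
    rw [show biprod.lift j₁ j₂ ≫ φ = j₁ ≫ bt + j₂ ≫ (b' ≫ u) from biprod.lift_desc]
    rw [show j₂ ≫ (b' ≫ u) = y ≫ u from by rw [← Category.assoc, ← hj₂], ← hy]
    abel
  have hkE : ∃ k : P ⟶ M₁ ⊞ N₁, biprod.lift j₁ j₂ ≫ π' - 𝟙 P = k ≫ q :=
    Triangle.coyoneda_exact₂ _ hT' (biprod.lift j₁ j₂ ≫ π' - 𝟙 P)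
      (by show (biprod.lift j₁ j₂ ≫ π' - 𝟙 P) ≫ p = 0
          rw [Preadditive.sub_comp, key, Category.id_comp, sub_self])
  obtain ⟨k, hk⟩ := hkE
  have hsr : biprod.lift (biprod.lift j₁ j₂) (-k) ≫ biprod.desc π' q = 𝟙 P := by
    rw [biprod.lift_desc, Preadditive.neg_comp, ← hk]
    abel
  have hPadd : InAdd M P := inAdd_of_retract _ _ hsr
    (inAdd_biprod (inAdd_biprod hM₀ hN₀) (inAdd_biprod hM₁ hN₁))
  exact ⟨M₁ ⊞ N₁, P, inAdd_biprod hM₁ hN₁, hPadd, q, p, ρ, hT'⟩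
end

section
/- Let T be a triangulated category and M a 2-rigid object, i.e. Hom_T(M, ΣM) = 0 = Hom_T(M, Σ²M). Then for any objects X, Y ∈ pr(M), every morphism X → ΣY factors through an object of add(ΣM); that is, Hom_T(X, ΣY) = [ΣM](X, ΣY). -/
open CategoryTheory CategoryTheory.Limits CategoryTheory.Pretriangulated

universe v u

variable {C : Type u} [Category.{v} C] [Preadditive C] [HasZeroObject C]
  [HasShift C ℤ] [∀ n : ℤ, (shiftFunctor C n).Additive] [Pretriangulated C]
  [HasFiniteBiproducts C]

/-- If all maps `M ⟶ M⟦n⟧` vanish, then all maps `A ⟶ B⟦n⟧` with `A, B ∈ add M` vanish. -/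
lemma hom_zero_of_inAdd {M : C} (n : ℤ) (hz : ∀ f : M ⟶ M⟦n⟧, f = 0)
    {A B : C} (hA : InAdd M A) (hB : InAdd M B) (g : A ⟶ B⟦n⟧) : g = 0 := by
  obtain ⟨p, iA, pA, hA⟩ := hA
  obtain ⟨q, iB, pB, hB⟩ := hB
  have hg : g = iA ≫ (pA ≫ g ≫ (shiftFunctor C n).map iB) ≫ (shiftFunctor C n).map pB := by
    calc g = (iA ≫ pA) ≫ g ≫ (shiftFunctor C n).map (𝟙 B) := by simp [hA]
    _ = _ := by rw [← hB, Functor.map_comp]; simp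
  rw [hg]
  have hmid : pA ≫ g ≫ (shiftFunctor C n).map iB = 0 := by
    apply biproduct.hom_ext'
    intro i
    set gi := biproduct.ι (fun _ : Fin p => M) i ≫ pA ≫ g ≫ (shiftFunctor C n).map iB with hgi
    have htot : gi = gi ≫ (shiftFunctor C n).map
        (∑ j : Fin q, biproduct.π (fun _ : Fin q => M) j ≫ biproduct.ι (fun _ : Fin q => M) j) := by
      rw [biproduct.total]; simp
    rw [Functor.map_sum, Preadditive.comp_sum] at htot
    have hterm : ∀ j : Fin q, gi ≫ (shiftFunctor C n).map
        (biproduct.π (fun _ : Fin q => M) j ≫ biproduct.ι (fun _ : Fin q => M) j) = 0 := by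
      intro j
      rw [Functor.map_comp, ← Category.assoc,
        hz (gi ≫ (shiftFunctor C n).map (biproduct.π (fun _ : Fin q => M) j))]
      simp
    simp only [hterm, Finset.sum_const_zero] at htot
    simpa using htot
  rw [hmid]
  simp

/-- If `M` is 2-rigid, then for any `X, Y ∈ pr(M)` every morphism
`X ⟶ ΣY` factors through an object of `add (ΣM)`. -/
theorem stmt2 (M : C)
    (hrigid1 : ∀ f : M ⟶ M⟦(1 : ℤ)⟧, f = 0)
    (hrigid2 : ∀ f : M ⟶ M⟦(2 : ℤ)⟧, f = 0)
    (X Y : C) (hX : Pr M X) (hY : Pr M Y) (f : X ⟶ Y⟦(1 : ℤ)⟧) :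
    FactorsThroughAddShift M f := by
  obtain ⟨Mm1, M0, hMm1, hM0, a, b, c, hTX⟩ := hX
  obtain ⟨Nm1, N0, hNm1, hN0, a', b', c', hTY⟩ := hY
  -- Step 1 : (b ≫ f) ≫ c'⟦1⟧ = 0, since it is a map `add M ⟶ (add M)⟦2⟧`
  have h2 : (b ≫ f) ≫ (shiftFunctor C (1 : ℤ)).map c' = 0 := by
    set e := (shiftFunctorAdd' C (1 : ℤ) 1 2 (by norm_num)).inv.app Nm1 with he
    have hmono : Mono e := by
      have : IsIso e := by rw [he]; infer_instance
      infer_instance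
    rw [← cancel_mono e]
    have := hom_zero_of_inAdd (2 : ℤ) hrigid2 hM0 hNm1
      (((b ≫ f) ≫ (shiftFunctor C (1 : ℤ)).map c') ≫ e)
    rw [this]
    simp
  -- Step 2 : b ≫ f = 0, since it then factors through `N0⟦1⟧` and maps
  -- `add M ⟶ (add M)⟦1⟧` vanish
  have hT2 := rot_of_distTriang _ (rot_of_distTriang _ hTY)
  obtain ⟨u, hu⟩ := Triangle.coyoneda_exact₁ _ hT2 (b ≫ f) (by
    exact h2)
  have hu0 : u = 0 := hom_zero_of_inAdd (1 : ℤ) hrigid1 hM0 hN0 u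
  have hbf : b ≫ f = 0 := by
    exact hu.trans (by rw [hu0, zero_comp]; rfl)
  -- Step 3 : f factors through `c : X ⟶ Mm1⟦1⟧`
  obtain ⟨v, hv⟩ := Triangle.yoneda_exact₃ _ hTX f hbf
  exact ⟨Mm1, hMm1, c, v, hv⟩
end

section
/- Let A be an additive category and I an ideal with I² = 0, and let F : A → A/I be the quotient functor. Then F detects isomorphisms: a morphism f in A is an isomorphism if and only if F(f) is an isomorphism in A/I. -/
open CategoryTheory

universe v u

variable {A : Type u} [Category.{v} A] [Preadditive A]

/-- A (two-sided additive) ideal of an additive category. -/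
structure CatIdeal (A : Type u) [Category.{v} A] [Preadditive A] where
  carrier : ∀ ⦃X Y : A⦄, (X ⟶ Y) → Prop
  zero_mem : ∀ X Y : A, carrier (0 : X ⟶ Y)
  add_mem : ∀ ⦃X Y : A⦄ ⦃f g : X ⟶ Y⦄, carrier f → carrier g → carrier (f + g)
  neg_mem : ∀ ⦃X Y : A⦄ ⦃f : X ⟶ Y⦄, carrier f → carrier (-f)
  comp_mem_left : ∀ ⦃X Y Z : A⦄ (f : X ⟶ Y) ⦃g : Y ⟶ Z⦄, carrier g → carrier (f ≫ g)
  comp_mem_right : ∀ ⦃X Y Z : A⦄ ⦃f : X ⟶ Y⦄ (g : Y ⟶ Z), carrier f → carrier (f ≫ g)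

/-- `I² = 0`: the composite of any two morphisms lying in `I` vanishes. -/
def CatIdeal.SquareZero (I : CatIdeal A) : Prop :=
  ∀ ⦃X Y Z : A⦄ ⦃f : X ⟶ Y⦄ ⦃g : Y ⟶ Z⦄, I.carrier f → I.carrier g → f ≫ g = 0

/-- If `I² = 0`, the quotient functor `A → A/I` detects isomorphisms:
`f` is an isomorphism in `A` iff its image in `A/I` is an isomorphism, i.e. iff there is
`g` with `f ≫ g - 𝟙 ∈ I` and `g ≫ f - 𝟙 ∈ I`. -/
theorem stmt5 (I : CatIdeal A) (hI : I.SquareZero) {X Y : A} (f : X ⟶ Y) :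
    IsIso f ↔ ∃ g : Y ⟶ X, I.carrier (f ≫ g - 𝟙 X) ∧ I.carrier (g ≫ f - 𝟙 Y) := by
  constructor
  · rintro ⟨g, hg1, hg2⟩
    exact ⟨g, by rw [hg1, sub_self]; exact I.zero_mem _ _,
            by rw [hg2, sub_self]; exact I.zero_mem _ _⟩
  · rintro ⟨g, ha, hb⟩
    set a : X ⟶ X := f ≫ g - 𝟙 X with ha'
    set b : Y ⟶ Y := g ≫ f - 𝟙 Y with hb'
    have hfg : f ≫ g = 𝟙 X + a := by rw [ha']; abel
    have hgf : g ≫ f = 𝟙 Y + b := by rw [hb']; abel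
    -- right inverse
    have hr : f ≫ (g - g ≫ a) = 𝟙 X := by
      have haa : a ≫ a = 0 := hI ha ha
      simp only [Preadditive.comp_sub, ← Category.assoc, hfg]
      simp [Preadditive.add_comp, haa]
    have hl : (g - b ≫ g) ≫ f = 𝟙 Y := by
      have hbb : b ≫ b = 0 := hI hb hb
      simp only [Preadditive.sub_comp, Category.assoc, hgf]
      simp [Preadditive.comp_add, hbb]
    have heq : g - b ≫ g = g - g ≫ a := by
      calc g - b ≫ g = (g - b ≫ g) ≫ (f ≫ (g - g ≫ a)) := by rw [hr]; simp
        _ = ((g - b ≫ g) ≫ f) ≫ (g - g ≫ a) := by simp [Category.assoc]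
        _ = g - g ≫ a := by rw [hl]; simp
    exact ⟨⟨g - g ≫ a, hr, by rw [← heq, hl]⟩⟩
end

section
/- Let T be a triangulated category and M a rigid object. Let I be the ideal of pr(M) consisting of morphisms that factor through a morphism of the form ΣM₁ → M₂ with M₁, M₂ ∈ add(M). Then I² = 0, i.e. the composite of any two morphisms in I is zero. -/
open CategoryTheory CategoryTheory.Limits CategoryTheory.Pretriangulated

universe v u

variable {C : Type u} [Category.{v} C] [Preadditive C] [HasZeroObject C]
  [HasShift C ℤ] [∀ n : ℤ, (shiftFunctor C n).Additive] [Pretriangulated C]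
  [HasFiniteBiproducts C]

/-- `f` lies in the ideal `I` of `pr(M)`: it factors through a morphism
`ΣM₁ ⟶ M₂` with `M₁, M₂ ∈ add M`. -/
def InIdeal (M : C) {X Y : C} (f : X ⟶ Y) : Prop :=
  ∃ (M1 M2 : C), InAdd M M1 ∧ InAdd M M2 ∧
    ∃ (u : X ⟶ M1⟦(1 : ℤ)⟧) (s : M1⟦(1 : ℤ)⟧ ⟶ M2) (v : M2 ⟶ Y),
      f = u ≫ s ≫ v

/-- For a rigid object `M`, any morphism from an object of `add M` to a shift of an
object of `add M` is zero. -/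
lemma hom_add_to_shift_add_zero (M : C)
    (hrigid : ∀ f : M ⟶ M⟦(1 : ℤ)⟧, f = 0)
    {A B : C} (hA : InAdd M A) (hB : InAdd M B) (h : A ⟶ B⟦(1 : ℤ)⟧) : h = 0 := by
  obtain ⟨n, iA, pA, hiA⟩ := hA
  obtain ⟨m, iB, pB, hiB⟩ := hB
  have h1 : ∀ (r : M ⟶ (⨁ fun _ : Fin m => M)⟦(1 : ℤ)⟧), r = 0 := by
    intro r
    have hr : r = r ≫ (shiftFunctor C (1 : ℤ)).map (𝟙 (⨁ fun _ : Fin m => M)) := by simp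
    rw [hr, ← biproduct.total, Functor.map_sum, Preadditive.comp_sum]
    refine Finset.sum_eq_zero (fun j _ => ?_)
    rw [Functor.map_comp, ← Category.assoc, hrigid (r ≫ (shiftFunctor C (1 : ℤ)).map
      (biproduct.π (fun _ : Fin m => M) j)), zero_comp]
  have key : ∀ (q : (⨁ fun _ : Fin n => M) ⟶ (⨁ fun _ : Fin m => M)⟦(1 : ℤ)⟧), q = 0 := by
    intro q
    apply biproduct.hom_ext'
    intro j
    rw [h1 (biproduct.ι (fun _ : Fin n => M) j ≫ q)]
    simp
  have hh : h = iA ≫ (pA ≫ h ≫ (shiftFunctor C (1 : ℤ)).map iB) ≫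
      (shiftFunctor C (1 : ℤ)).map pB := by
    rw [Category.assoc, Category.assoc, ← Functor.map_comp, hiB, CategoryTheory.Functor.map_id,
      Category.comp_id, ← Category.assoc, hiA, Category.id_comp]
  rw [hh, key (pA ≫ h ≫ (shiftFunctor C (1 : ℤ)).map iB), zero_comp, comp_zero]

/-- For a rigid object `M`, the ideal `I` of `pr(M)` of morphisms
factoring through a morphism `ΣM₁ ⟶ M₂` with `M₁, M₂ ∈ add M` satisfies `I² = 0`. -/
theorem stmt7 (M : C)
    (hrigid : ∀ f : M ⟶ M⟦(1 : ℤ)⟧, f = 0)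
    (X Y Z : C) (hX : Pr M X) (hY : Pr M Y) (hZ : Pr M Z)
    (f : X ⟶ Y) (g : Y ⟶ Z) (hf : InIdeal M f) (hg : InIdeal M g) :
    f ≫ g = 0 := by
  obtain ⟨M1, M2, hM1, hM2, u, s, v, rfl⟩ := hf
  obtain ⟨M1', M2', hM1', hM2', u', s', v', rfl⟩ := hg
  have : v ≫ u' = 0 := hom_add_to_shift_add_zero M hrigid hM2 hM1' (v ≫ u')
  simp [reassoc_of% this]
end

section
/- Let T be a Krull–Schmidt triangulated category, and let X ∈ T be indecomposable with (rad T)(−, X) ≠ 0. For a sequence Z →g Y →f X the following are equivalent: (i) f is a sink morphism (right minimal and right almost split) of X, and g is a right minimal weak kernel of f; (ii) there exists e : X → ΣZ such that Z →g Y →f X →e ΣZ is an almost split triangle. -/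
open CategoryTheory CategoryTheory.Limits CategoryTheory.Pretriangulated

universe v u

variable {C : Type u} [Category.{v} C] [Preadditive C] [HasZeroObject C]
  [HasShift C ℤ] [∀ n : ℤ, (shiftFunctor C n).Additive] [Pretriangulated C]
  [HasFiniteBiproducts C]

/-- A Krull–Schmidt category: every object is a finite direct sum of objects with
local endomorphism rings. -/
def IsKrullSchmidtCat (C : Type u) [Category.{v} C] [Preadditive C]
    [HasFiniteBiproducts C] : Prop :=
  ∀ X : C, ∃ (n : ℕ) (Y : Fin n → C),
    (∀ i, IsLocalRing (End (Y i))) ∧ Nonempty (X ≅ ⨁ Y)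

/-- `f` is right minimal. -/
def RightMinimal {Y X : C} (f : Y ⟶ X) : Prop :=
  ∀ g : Y ⟶ Y, g ≫ f = f → IsIso g

/-- `f` is right almost split. -/
def RightAlmostSplit {Y X : C} (f : Y ⟶ X) : Prop :=
  (¬ ∃ s : X ⟶ Y, s ≫ f = 𝟙 X) ∧
  ∀ ⦃Z : C⦄ (h : Z ⟶ X), (¬ ∃ s : X ⟶ Z, s ≫ h = 𝟙 X) → ∃ t : Z ⟶ Y, t ≫ f = h

/-- `f` is a sink morphism: right minimal and right almost split. -/
def SinkMorphism {Y X : C} (f : Y ⟶ X) : Prop :=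
  RightMinimal f ∧ RightAlmostSplit f

/-- `g` is a weak kernel of `f`. -/
def IsWeakKernel {Z Y X : C} (g : Z ⟶ Y) (f : Y ⟶ X) : Prop :=
  g ≫ f = 0 ∧ ∀ ⦃W : C⦄ (h : W ⟶ Y), h ≫ f = 0 → ∃ t : W ⟶ Z, t ≫ g = h

/-- `f` lies in the Jacobson radical of the category. -/
def InRadical {X Y : C} (f : X ⟶ Y) : Prop :=
  ∀ g : Y ⟶ X, IsIso (𝟙 X - f ≫ g)

/-- `X` is indecomposable. -/
def Indecomp (X : C) : Prop :=
  ¬ IsZero X ∧ ∀ e : X ⟶ X, e ≫ e = e → e = 0 ∨ e = 𝟙 X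

/-- In a Krull–Schmidt category, an indecomposable object has a local-like endomorphism
dichotomy: every endomorphism `c` satisfies `IsIso c ∨ IsIso (𝟙 - c)`. -/
lemma end_dichotomy (hKS : IsKrullSchmidtCat C) {X : C} (hX : Indecomp X) (c : X ⟶ X) :
    IsIso c ∨ IsIso (𝟙 X - c) := by
  obtain ⟨n, Ys, hloc, ⟨φ⟩⟩ := hKS X
  match n, Ys, hloc, φ with
  | 0, Ys, hloc, φ =>
    exfalso
    apply hX.1
    have hid : 𝟙 (⨁ Ys) = 0 := by
      rw [← biproduct.total]
      simp
    exact (IsZero.of_iso ((IsZero.iff_id_eq_zero _).2 hid) φ)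
  | 1, Ys, hloc, φ =>
    have hπι : biproduct.π Ys 0 ≫ biproduct.ι Ys 0 = 𝟙 (⨁ Ys) := by
      rw [← biproduct.total, Fin.sum_univ_one]
    let ψ : X ≅ Ys 0 := φ ≪≫ ⟨biproduct.π Ys 0, biproduct.ι Ys 0, hπι, by simp⟩
    have hlocal := hloc 0
    set d : End (Ys 0) := ψ.inv ≫ c ≫ ψ.hom with hd
    haveI := hlocal
    rcases IsLocalRing.isUnit_or_isUnit_of_add_one (a := d) (b := 1 - d) (by abel) with h | h
    · left
      have : IsIso d := (isUnit_iff_isIso d).1 h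
      have hc : c = ψ.hom ≫ d ≫ ψ.inv := by simp [hd]
      rw [hc]; infer_instance
    · right
      have h1 : (1 - d : End (Ys 0)) = ψ.inv ≫ (𝟙 X - c) ≫ ψ.hom := by
        simp [hd, End.one_def, Preadditive.comp_sub, Preadditive.sub_comp]
      have : IsIso ((1 - d : End (Ys 0)) : Ys 0 ⟶ Ys 0) := (isUnit_iff_isIso _).1 h
      rw [h1] at this
      have hc : 𝟙 X - c = ψ.hom ≫ (ψ.inv ≫ (𝟙 X - c) ≫ ψ.hom) ≫ ψ.inv := by simp
      rw [hc]; infer_instance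
  | (m + 2), Ys, hloc, φ =>
    exfalso
    set e : X ⟶ X := φ.hom ≫ biproduct.π Ys 0 ≫ biproduct.ι Ys 0 ≫ φ.inv with he
    have hidem : e ≫ e = e := by
      simp [he]
    rcases hX.2 e hidem with h0 | h1
    · -- then π₀ ≫ ι₀ = 0, so 𝟙 (Ys 0) = 0, contradicting nontriviality
      have hπι : biproduct.π Ys 0 ≫ biproduct.ι Ys 0 = 0 := by
        have := congrArg (fun t => φ.inv ≫ t ≫ φ.hom) h0
        simpa [he] using this
      have hone : (𝟙 (Ys 0) : End (Ys 0)) = 0 := by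
        have := congrArg (fun t => biproduct.ι Ys 0 ≫ t ≫ biproduct.π Ys 0) hπι
        simpa using this
      haveI : Nontrivial (End (Ys 0)) := (hloc 0).toNontrivial
      exact one_ne_zero (α := End (Ys 0)) (by simpa [End.one_def] using hone)
    · -- then π₀ ≫ ι₀ = 𝟙, so 𝟙 (Ys 1) = 0, contradicting nontriviality
      have hπι : biproduct.π Ys 0 ≫ biproduct.ι Ys 0 = 𝟙 (⨁ Ys) := by
        have := congrArg (fun t => φ.inv ≫ t ≫ φ.hom) h1
        simpa [he] using this
      have h10 : (1 : Fin (m + 2)) ≠ 0 := by simp [Fin.ext_iff]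
      have hone : (𝟙 (Ys 1) : End (Ys 1)) = 0 := by
        have := congrArg (fun t => biproduct.ι Ys 1 ≫ t ≫ biproduct.π Ys 1) hπι
        simpa [biproduct.ι_π_ne _ h10] using this.symm
      haveI : Nontrivial (End (Ys 1)) := (hloc 1).toNontrivial
      exact one_ne_zero (α := End (Ys 1)) (by simpa [End.one_def] using hone)

/-- A nonzero-target radical morphism is not a split epimorphism. -/
lemma rad_not_splitEpi {W X : C} (hX : ¬ IsZero X) {w : W ⟶ X} (hw : InRadical w) :
    ¬ ∃ s : X ⟶ W, s ≫ w = 𝟙 X := by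
  rintro ⟨s, hs⟩
  have h := hw s
  have hq : (w ≫ s) ≫ (w ≫ s) = w ≫ s := by
    rw [Category.assoc, ← Category.assoc s w s, hs, Category.id_comp]
  have hz : (𝟙 W - w ≫ s) ≫ (w ≫ s) = 0 := by
    rw [Preadditive.sub_comp, Category.id_comp, hq, sub_self]
  have hq0 : w ≫ s = 0 := by
    have h2 : inv (𝟙 W - w ≫ s) ≫ ((𝟙 W - w ≫ s) ≫ (w ≫ s)) = w ≫ s := by
      rw [← Category.assoc, IsIso.inv_hom_id, Category.id_comp]
    rw [hz, Limits.comp_zero] at h2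
    exact h2.symm
  apply hX
  rw [IsZero.iff_id_eq_zero]
  calc 𝟙 X = (s ≫ w) ≫ (s ≫ w) := by rw [hs]; simp
  _ = s ≫ (w ≫ s) ≫ w := by simp
  _ = 0 := by rw [hq0]; simp

/-- A right almost split morphism into `X` is nonzero provided there is a nonzero radical
morphism into `X`. -/
lemma ras_ne_zero {Y X : C} (hX : Indecomp X)
    (hrad : ∃ (W : C) (w : W ⟶ X), InRadical w ∧ w ≠ 0)
    {f : Y ⟶ X} (hras : RightAlmostSplit f) : f ≠ 0 := by
  obtain ⟨W, w, hw, hw0⟩ := hrad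
  obtain ⟨t, ht⟩ := hras.2 w (rad_not_splitEpi hX.1 hw)
  intro h0
  exact hw0 (by rw [← ht, h0, Limits.comp_zero])

/-- In a distinguished triangle whose second morphism is right almost split with
indecomposable target admitting a nonzero radical morphism, the first morphism
is right minimal. -/
lemma mor₁_rightMinimal (hKS : IsKrullSchmidtCat C) {T : Triangle C}
    (hT : T ∈ distTriang C) (hX3 : Indecomp T.obj₃)
    (hras : RightAlmostSplit T.mor₂)
    (hrad : ∃ (W : C) (w : W ⟶ T.obj₃), InRadical w ∧ w ≠ 0) :
    RightMinimal T.mor₁ := by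
  intro u hu
  obtain ⟨c, hc1, hc2⟩ := complete_distinguished_triangle_morphism T T hT hT u (𝟙 _)
    (by rw [Category.comp_id, hu])
  rcases end_dichotomy hKS hX3 c with hiso | hiso
  · let φ : T ⟶ T := Triangle.homMk T T u (𝟙 _) c (by rw [Category.comp_id, hu]) hc1 hc2
    have := isIso₁_of_isIso₂₃ φ hT hT (by change IsIso (𝟙 _); infer_instance) (by dsimp [φ]; exact hiso)
    simpa [φ] using this
  · exfalso
    have hfc : T.mor₂ ≫ c = T.mor₂ := by rw [hc1, Category.id_comp]
    have hz : T.mor₂ ≫ (𝟙 T.obj₃ - c) = 0 := by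
      rw [Preadditive.comp_sub, Category.comp_id, hfc, sub_self]
    have hf0 : T.mor₂ = 0 := by
      have h2 : (T.mor₂ ≫ (𝟙 T.obj₃ - c)) ≫ inv (𝟙 T.obj₃ - c) = T.mor₂ := by
        rw [Category.assoc, IsIso.hom_inv_id, Category.comp_id]
      rw [hz, Limits.zero_comp] at h2
      exact h2.symm
    exact ras_ne_zero hX3 hrad hras hf0

/-- In a Krull–Schmidt triangulated category, for `X` indecomposable with
`(rad C)(−, X) ≠ 0` and a sequence `Z →g Y →f X`, the following are equivalent:
(i) `f` is a sink morphism and `g` is a right minimal weak kernel of `f`;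
(ii) there is `e : X ⟶ ΣZ` such that `Z →g Y →f X →e ΣZ` is an almost split triangle
(a distinguished triangle whose second morphism is a sink morphism). -/
theorem stmt9 (hKS : IsKrullSchmidtCat C)
    (X Y Z : C) (hX : Indecomp X)
    (hrad : ∃ (W : C) (w : W ⟶ X), InRadical w ∧ w ≠ 0)
    (g : Z ⟶ Y) (f : Y ⟶ X) :
    (SinkMorphism f ∧ RightMinimal g ∧ IsWeakKernel g f) ↔
    (∃ e : X ⟶ Z⟦(1 : ℤ)⟧, (Triangle.mk g f e ∈ distTriang C) ∧ SinkMorphism f) := by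
  constructor
  · rintro ⟨hsink, hming, hwk⟩
    obtain ⟨Z', g', e', hT'⟩ := distinguished_cocone_triangle₁ f
    have hg'f : g' ≫ f = 0 := comp_distTriang_mor_zero₁₂ _ hT'
    have hming' : RightMinimal g' :=
      mor₁_rightMinimal hKS hT' hX hsink.2 hrad
    obtain ⟨u, hu⟩ := hwk.2 g' hg'f
    obtain ⟨v, hv⟩ : ∃ v : Z ⟶ Z', g = v ≫ g' := Triangle.coyoneda_exact₂ _ hT' g hwk.1
    -- hv : g = v ≫ g'
    have hvg : v ≫ g' = g := hv.symm
    have hvu : IsIso (v ≫ u) := hming _ (by rw [Category.assoc, hu, hvg])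
    have huv : IsIso (u ≫ v) := hming' _ (by rw [Category.assoc, hvg, hu])
    have hur : u ≫ (v ≫ inv (u ≫ v)) = 𝟙 Z' := by
      rw [← Category.assoc, IsIso.hom_inv_id]
    have hul : (inv (v ≫ u) ≫ v) ≫ u = 𝟙 Z := by
      rw [Category.assoc, IsIso.inv_hom_id]
    have heq : v ≫ inv (u ≫ v) = inv (v ≫ u) ≫ v := by
      calc v ≫ inv (u ≫ v) = 𝟙 Z ≫ (v ≫ inv (u ≫ v)) := by rw [Category.id_comp]
      _ = ((inv (v ≫ u) ≫ v) ≫ u) ≫ (v ≫ inv (u ≫ v)) := by rw [hul]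
      _ = (inv (v ≫ u) ≫ v) ≫ (u ≫ (v ≫ inv (u ≫ v))) := by simp only [Category.assoc]
      _ = inv (v ≫ u) ≫ v := by rw [hur]; simp
    have hu_iso : IsIso u := ⟨v ≫ inv (u ≫ v), hur, by rw [heq]; exact hul⟩
    refine ⟨e' ≫ (shiftFunctor C (1 : ℤ)).map u, ?_, hsink⟩
    refine isomorphic_distinguished _ hT' _ ?_
    refine Triangle.isoMk _ _ (asIso u).symm (Iso.refl _) (Iso.refl _) ?_ ?_ ?_
    · dsimp [Triangle.mk]
      rw [Category.comp_id, ← hu, ← Category.assoc, IsIso.inv_hom_id, Category.id_comp]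
    · dsimp [Triangle.mk]; rw [Category.comp_id, Category.id_comp]
    · dsimp [Triangle.mk]
      rw [Category.id_comp, Category.assoc, ← Functor.map_comp, IsIso.hom_inv_id]
      simp
  · rintro ⟨e, hT, hsink⟩
    refine ⟨hsink, mor₁_rightMinimal hKS hT hX hsink.2 hrad,
      comp_distTriang_mor_zero₁₂ _ hT, fun W h hh => ?_⟩
    obtain ⟨t, ht⟩ := Triangle.coyoneda_exact₂ _ hT h hh
    exact ⟨t, ht.symm⟩
end

section
/- Let T be a triangulated category, M a rigid object with Hom_T(M, Σ⁻¹M) = 0, and X, Y ∈ pr(M) with chosen presentation triangles M⁻¹_X →a_X M⁰_X →b_X X →c_X ΣM⁻¹_X and similarly for Y. Then the map ρ sending f : X → Σ⁻¹Y to −Σ⁻¹c_Y ∘ f ∘ b_X is a surjection from Hom_T(X, Σ⁻¹Y) onto {g : M⁰_X → M⁻¹_Y : g∘a_X = 0 and a_Y∘g = 0}, and its kernel consists exactly of morphisms factoring through a morphism of the form ΣM → Σ⁻¹M' with M, M' ∈ add(M). -/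
open CategoryTheory CategoryTheory.Limits CategoryTheory.Pretriangulated

universe v u

variable {C : Type u} [Category.{v} C] [Preadditive C] [HasZeroObject C]
  [HasShift C ℤ] [∀ n : ℤ, (shiftFunctor C n).Additive] [Pretriangulated C]
  [HasFiniteBiproducts C]

/-- Any map `A ⟶ M⟦-1⟧` with `A ∈ add M` vanishes when `Hom(M, M⟦-1⟧) = 0`. -/
lemma homToShiftNegM_zero {M A : C} (hr : ∀ f : M ⟶ M⟦(-1 : ℤ)⟧, f = 0)
    (hA : InAdd M A) (ψ : A ⟶ M⟦(-1 : ℤ)⟧) : ψ = 0 := by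
  obtain ⟨n, i, p, hip⟩ := hA
  have hpψ : p ≫ ψ = 0 := by
    apply biproduct.hom_ext'
    intro j
    simp only [comp_zero]
    exact hr _
  calc ψ = (i ≫ p) ≫ ψ := by rw [hip, Category.id_comp]
    _ = i ≫ (p ≫ ψ) := by rw [Category.assoc]
    _ = 0 := by rw [hpψ, comp_zero]

/-- Any map `A⟦1⟧ ⟶ B` with `A, B ∈ add M` vanishes when `Hom(M, M⟦-1⟧) = 0`. -/
lemma hom_shiftOne_zero {M A B : C} (hr : ∀ f : M ⟶ M⟦(-1 : ℤ)⟧, f = 0)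
    (hA : InAdd M A) (hB : InAdd M B) (φ : A⟦(1 : ℤ)⟧ ⟶ B) : φ = 0 := by
  obtain ⟨k, iB, pB, hB'⟩ := hB
  set adj := (shiftEquiv C (1 : ℤ)).toAdjunction with hadj
  have hE0 : ∀ (U V : C), (adj.homEquiv U V) 0 = 0 := by
    intro U V
    simp [Adjunction.homEquiv_apply]
  have hcomp : φ ≫ iB = 0 := by
    apply biproduct.hom_ext
    intro j
    have hz : (adj.homEquiv A M) (φ ≫ iB ≫ biproduct.π _ j) = 0 :=
      homToShiftNegM_zero hr hA _
    have := (adj.homEquiv A M).injective (hz.trans (hE0 A M).symm)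
    simp only [Category.assoc, zero_comp]
    exact this
  calc φ = φ ≫ (iB ≫ pB) := by rw [hB', Category.comp_id]
    _ = (φ ≫ iB) ≫ pB := by rw [Category.assoc]
    _ = 0 := by rw [hcomp, zero_comp]

/-- Any map `A ⟶ B⟦-1⟧` with `A, B ∈ add M` vanishes when `Hom(M, M⟦-1⟧) = 0`. -/
lemma hom_shiftNeg_zero {M A B : C} (hr : ∀ f : M ⟶ M⟦(-1 : ℤ)⟧, f = 0)
    (hA : InAdd M A) (hB : InAdd M B) (φ : A ⟶ B⟦(-1 : ℤ)⟧) : φ = 0 := by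
  set adj := (shiftEquiv C (1 : ℤ)).toAdjunction with hadj
  have h1 : (adj.homEquiv A B).symm φ = 0 := hom_shiftOne_zero hr hA hB _
  have h2 : (adj.homEquiv A B).symm 0 = 0 := by
    simp [Adjunction.homEquiv_symm_apply]
  exact (adj.homEquiv A B).symm.injective (h1.trans h2.symm)

/-- Assume `M` is rigid and moreover `Hom(M, Σ⁻¹M) = 0`. For
`X, Y ∈ pr(M)` with chosen presentation triangles, the map
`ρ : f ↦ −Σ⁻¹c_Y ∘ f ∘ b_X` surjects `Hom(X, Σ⁻¹Y)` onto the set of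
`g : M⁰_X ⟶ M⁻¹_Y` with `g ∘ a_X = 0` and `a_Y ∘ g = 0`, and its kernel consists
exactly of the morphisms factoring through a morphism `ΣM₁ ⟶ Σ⁻¹M₂` with
`M₁, M₂ ∈ add M`. -/
theorem stmt17 (M X Y M1X M0X M1Y M0Y : C)
    (hrigid : ∀ f : M ⟶ M⟦(1 : ℤ)⟧, f = 0)
    (hrigidneg : ∀ f : M ⟶ M⟦(-1 : ℤ)⟧, f = 0)
    (h1X : InAdd M M1X) (h0X : InAdd M M0X) (h1Y : InAdd M M1Y) (h0Y : InAdd M M0Y)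
    (aX : M1X ⟶ M0X) (bX : M0X ⟶ X) (cX : X ⟶ M1X⟦(1 : ℤ)⟧)
    (aY : M1Y ⟶ M0Y) (bY : M0Y ⟶ Y) (cY : Y ⟶ M1Y⟦(1 : ℤ)⟧)
    (hTX : Triangle.mk aX bX cX ∈ distTriang C)
    (hTY : Triangle.mk aY bY cY ∈ distTriang C) :
    -- the map ρ
    ∀ ρ : (X ⟶ Y⟦(-1 : ℤ)⟧) → (M0X ⟶ M1Y),
      (∀ f : X ⟶ Y⟦(-1 : ℤ)⟧,
          ρ f = -(bX ≫ f ≫ cY⟦(-1 : ℤ)⟧' ≫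
            (shiftFunctorCompIsoId C (1 : ℤ) (-1 : ℤ) (by ring)).hom.app M1Y)) →
      -- ρ lands in Hom(P(X), Σ⁻¹P(Y))
      (∀ f : X ⟶ Y⟦(-1 : ℤ)⟧, aX ≫ ρ f = 0 ∧ ρ f ≫ aY = 0) ∧
      -- ρ is surjective onto that set
      (∀ g : M0X ⟶ M1Y, aX ≫ g = 0 → g ≫ aY = 0 →
          ∃ f : X ⟶ Y⟦(-1 : ℤ)⟧, ρ f = g) ∧
      -- the kernel of ρ
      (∀ f : X ⟶ Y⟦(-1 : ℤ)⟧, ρ f = 0 ↔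
          ∃ (M1 M2 : C), InAdd M M1 ∧ InAdd M M2 ∧
            ∃ (u : X ⟶ M1⟦(1 : ℤ)⟧) (s : M1⟦(1 : ℤ)⟧ ⟶ M2⟦(-1 : ℤ)⟧)
              (v : M2⟦(-1 : ℤ)⟧ ⟶ Y⟦(-1 : ℤ)⟧), f = u ≫ s ≫ v) := by
  intro ρ hρ
  -- the inverse rotation of the presentation triangle of `Y`
  set TY' := (Triangle.mk aY bY cY).invRotate with hTY'def
  have hTY' : TY' ∈ distTriang C := inv_rot_of_distTriang _ hTY
  set TY'' := TY'.invRotate with hTY''def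
  have hTY'' : TY'' ∈ distTriang C := inv_rot_of_distTriang _ hTY'
  set mY : Y⟦(-1 : ℤ)⟧ ⟶ M1Y := TY'.mor₁ with hmYdef
  set mY' : M0Y⟦(-1 : ℤ)⟧ ⟶ Y⟦(-1 : ℤ)⟧ := TY''.mor₁ with hmY'def
  -- ρ f = bX ≫ f ≫ (mor₁ of the inverse rotation)
  have hm : ∀ f : X ⟶ Y⟦(-1 : ℤ)⟧, ρ f = bX ≫ f ≫ mY := by
    intro f
    rw [hρ f]
    have e : mY = -(shiftFunctor C (-1)).map cY ≫
        (shiftFunctorCompIsoId C (1 : ℤ) (-1 : ℤ) (by ring)).hom.app M1Y :=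
      Triangle.invRotate_mor₁ (Triangle.mk aY bY cY)
    rw [e]
    simp only [Preadditive.comp_neg, Preadditive.neg_comp, Category.assoc]
  have habX : aX ≫ bX = 0 := comp_distTriang_mor_zero₁₂ _ hTX
  have hmaY : mY ≫ aY = 0 := comp_distTriang_mor_zero₁₂ _ hTY'
  refine ⟨?_, ?_, ?_⟩
  · -- ρ lands in the right set
    intro f
    constructor
    · rw [hm f, ← Category.assoc, habX, zero_comp]
    · rw [hm f]
      simp only [Category.assoc]
      rw [hmaY, comp_zero, comp_zero]
  · -- surjectivity
    intro g hga hgaY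
    obtain ⟨h, hh⟩ : ∃ h : X ⟶ M1Y, g = bX ≫ h := Triangle.yoneda_exact₂ _ hTX g hga
    replace hh : g = bX ≫ h := hh
    have hbh : bX ≫ h ≫ aY = 0 := by
      rw [← Category.assoc, ← hh, hgaY]
    have hhaY : h ≫ aY = 0 := by
      obtain ⟨k, hk⟩ : ∃ k : M1X⟦(1 : ℤ)⟧ ⟶ M0Y, h ≫ aY = cX ≫ k := Triangle.yoneda_exact₃ _ hTX (h ≫ aY) hbh
      replace hk : h ≫ aY = cX ≫ k := hk
      rw [hk, hom_shiftOne_zero hrigidneg h1X h0Y k, comp_zero]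
    obtain ⟨f, hf⟩ : ∃ f : X ⟶ Y⟦(-1 : ℤ)⟧, h = f ≫ mY := Triangle.coyoneda_exact₂ _ hTY' h hhaY
    refine ⟨f, ?_⟩
    rw [hm f, ← hf]
    exact hh.symm
  · -- kernel
    intro f
    constructor
    · intro h0
      have h1 : (bX ≫ f) ≫ mY = 0 := by
        have := (hm f).symm.trans h0
        rw [Category.assoc]
        simpa using this
      have hbf : bX ≫ f = 0 := by
        obtain ⟨t, ht⟩ : ∃ t : M0X ⟶ M0Y⟦(-1 : ℤ)⟧, bX ≫ f = t ≫ mY' := Triangle.coyoneda_exact₂ _ hTY'' (bX ≫ f) h1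
        rw [ht, hom_shiftNeg_zero hrigidneg h0X h0Y t, zero_comp]
      obtain ⟨s', hs'⟩ : ∃ s' : M1X⟦(1 : ℤ)⟧ ⟶ Y⟦(-1 : ℤ)⟧, f = cX ≫ s' := Triangle.yoneda_exact₃ _ hTX f hbf
      replace hs' : f = cX ≫ s' := hs'
      have hs'm : s' ≫ mY = 0 := hom_shiftOne_zero hrigidneg h1X h1Y _
      obtain ⟨s, hs⟩ : ∃ s : M1X⟦(1 : ℤ)⟧ ⟶ M0Y⟦(-1 : ℤ)⟧, s' = s ≫ mY' := Triangle.coyoneda_exact₂ _ hTY'' s' hs'm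
      exact ⟨M1X, M0Y, h1X, h0Y, cX, s, mY', by rw [hs', hs]⟩
    · rintro ⟨M1, M2, hM1, hM2, u, s, v, rfl⟩
      rw [hm]
      have hz : s ≫ v ≫ mY = 0 := by
        have := hom_shiftOne_zero hrigidneg hM1 h1Y (s ≫ v ≫ mY)
        exact this
      simp only [Category.assoc]
      rw [hz, comp_zero, comp_zero]
end

section
/- Let T be a triangulated category, M a rigid object, and X, Y, Z ∈ pr(M) with chosen presentation triangles. Let g ∈ [ΣM](X, ΣY) and h ∈ Hom_T(Z, X). Then under the bijection of Lemma (taking presentation of extensions), the presentation of the composite g∘h ∈ [ΣM](Z, ΣY) equals the composition P(g)∘P(h) in the homotopy category, where P(h) is a presentation of h (a homotopy class of chain maps between the 2-term complexes) and P(g) ∈ Hom(P(X), ΣP(Y)) corresponds to g. -/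
open CategoryTheory CategoryTheory.Limits CategoryTheory.Pretriangulated

universe v u

variable {C : Type u} [Category.{v} C] [Preadditive C] [HasZeroObject C]
  [HasShift C ℤ] [∀ n : ℤ, (shiftFunctor C n).Additive] [Pretriangulated C]
  [HasFiniteBiproducts C]

/-- Let `M` be rigid, `X, Y, Z ∈ pr(M)` with chosen presentation
triangles. Let `g ∈ [ΣM](X, ΣY)` with presentation `f = P(g)` (i.e.
`g = Σb_Y ∘ Σf ∘ c_X`) and let `h : Z ⟶ X` with presentation `(h⁻¹, h⁰)`. Then
`h⁻¹ ≫ f` is a presentation of the composite `g ∘ h`, i.e.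
`P(g ∘ h) = P(g) ∘ P(h)`:  `h ≫ g = c_Z ≫ Σ(h⁻¹ ≫ f) ≫ Σb_Y`. -/
theorem stmt19 (M X Y Z M1X M0X M1Y M0Y M1Z M0Z : C)
    (hrigid : ∀ f : M ⟶ M⟦(1 : ℤ)⟧, f = 0)
    (h1X : InAdd M M1X) (h0X : InAdd M M0X) (h1Y : InAdd M M1Y) (h0Y : InAdd M M0Y)
    (h1Z : InAdd M M1Z) (h0Z : InAdd M M0Z)
    (aX : M1X ⟶ M0X) (bX : M0X ⟶ X) (cX : X ⟶ M1X⟦(1 : ℤ)⟧)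
    (aY : M1Y ⟶ M0Y) (bY : M0Y ⟶ Y) (cY : Y ⟶ M1Y⟦(1 : ℤ)⟧)
    (aZ : M1Z ⟶ M0Z) (bZ : M0Z ⟶ Z) (cZ : Z ⟶ M1Z⟦(1 : ℤ)⟧)
    (hTX : Triangle.mk aX bX cX ∈ distTriang C)
    (hTY : Triangle.mk aY bY cY ∈ distTriang C)
    (hTZ : Triangle.mk aZ bZ cZ ∈ distTriang C)
    -- g ∈ [ΣM](X, ΣY), with presentation f = P(g)
    (g : X ⟶ Y⟦(1 : ℤ)⟧) (hg : FactorsThroughAddShift M g)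
    (f : M1X ⟶ M0Y) (hgf : g = cX ≫ f⟦(1 : ℤ)⟧' ≫ bY⟦(1 : ℤ)⟧')
    -- h : Z ⟶ X with presentation (h⁻¹, h⁰)
    (h : Z ⟶ X) (hm1 : M1Z ⟶ M1X) (h0 : M0Z ⟶ M0X)
    (hsq1 : hm1 ≫ aX = aZ ≫ h0)
    (hsq2 : h0 ≫ bX = bZ ≫ h)
    (hsq3 : h ≫ cX = cZ ≫ hm1⟦(1 : ℤ)⟧') :
    h ≫ g = cZ ≫ (hm1 ≫ f)⟦(1 : ℤ)⟧' ≫ bY⟦(1 : ℤ)⟧' := by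
  rw [hgf, ← Category.assoc, hsq3, Functor.map_comp]
  simp
end
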